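/- For every β ∈ ℝ, setting H(x,y,z) = (1/4)(−x² + y²) − βz and C(x,y,z) = (1/2)(x² + y²) + z², the Rikitake vector field X(x,y,z) = (yz + βy, xz − βx, −xy) satisfies X(x,y,z) = ∇H(x,y,z) × ∇C(x,y,z) for all (x,y,z) ∈ ℝ³; consequently H and C are first integrals of the conservative Rikitake system (x' = yz + βy, y' = xz − βx, z' = −xy), i.e., they are constant along all its differentiable solutions. -/

import Mathlib

open scoped RealInnerProductSpace

noncomputable section

abbrev E3 := EuclideanSpace ℝ (Fin 3)

/-- The cross product on `EuclideanSpace ℝ (Fin 3)`. -/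
noncomputable def cross3 (a b : E3) : E3 :=
  (WithLp.equiv 2 (Fin 3 → ℝ)).symm
    (crossProduct (WithLp.equiv 2 (Fin 3 → ℝ) a) (WithLp.equiv 2 (Fin 3 → ℝ) b))

private lemma gradH (β : ℝ) (u : E3) :
    HasGradientAt (fun u : E3 => (1 / 4 : ℝ) * (-(u 0 * u 0) + u 1 * u 1) - β * u 2)
      ((WithLp.equiv 2 (Fin 3 → ℝ)).symm ![-(1/2) * u 0, (1/2) * u 1, -β]) u := by
  rw [hasGradientAt_iff_hasFDerivAt]
  have h0 : HasFDerivAt (fun u : E3 => u 0) (EuclideanSpace.proj (0 : Fin 3) : E3 →L[ℝ] ℝ) u :=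
    (EuclideanSpace.proj (0 : Fin 3) : E3 →L[ℝ] ℝ).hasFDerivAt
  have h1 : HasFDerivAt (fun u : E3 => u 1) (EuclideanSpace.proj (1 : Fin 3) : E3 →L[ℝ] ℝ) u :=
    (EuclideanSpace.proj (1 : Fin 3) : E3 →L[ℝ] ℝ).hasFDerivAt
  have h2 : HasFDerivAt (fun u : E3 => u 2) (EuclideanSpace.proj (2 : Fin 3) : E3 →L[ℝ] ℝ) u :=
    (EuclideanSpace.proj (2 : Fin 3) : E3 →L[ℝ] ℝ).hasFDerivAt
  have key := ((((h0.mul h0).neg.add (h1.mul h1)).const_mul (1/4 : ℝ)).sub (h2.const_mul β))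
  refine key.congr_fderiv ?_
  ext v
  simp [InnerProductSpace.toDual_apply_apply, PiLp.inner_apply, Fin.sum_univ_three,
    WithLp.equiv_symm_apply, PiLp.toLp_apply]
  ring

private lemma gradC (u : E3) :
    HasGradientAt (fun u : E3 => (1 / 2 : ℝ) * (u 0 * u 0 + u 1 * u 1) + u 2 * u 2)
      ((WithLp.equiv 2 (Fin 3 → ℝ)).symm ![u 0, u 1, 2 * u 2]) u := by
  rw [hasGradientAt_iff_hasFDerivAt]
  have h0 : HasFDerivAt (fun u : E3 => u 0) (EuclideanSpace.proj (0 : Fin 3) : E3 →L[ℝ] ℝ) u :=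
    (EuclideanSpace.proj (0 : Fin 3) : E3 →L[ℝ] ℝ).hasFDerivAt
  have h1 : HasFDerivAt (fun u : E3 => u 1) (EuclideanSpace.proj (1 : Fin 3) : E3 →L[ℝ] ℝ) u :=
    (EuclideanSpace.proj (1 : Fin 3) : E3 →L[ℝ] ℝ).hasFDerivAt
  have h2 : HasFDerivAt (fun u : E3 => u 2) (EuclideanSpace.proj (2 : Fin 3) : E3 →L[ℝ] ℝ) u :=
    (EuclideanSpace.proj (2 : Fin 3) : E3 →L[ℝ] ℝ).hasFDerivAt
  have key := ((((h0.mul h0).add (h1.mul h1)).const_mul (1/2 : ℝ)).add (h2.mul h2))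
  refine key.congr_fderiv ?_
  ext v
  simp [InnerProductSpace.toDual_apply_apply, PiLp.inner_apply, Fin.sum_univ_three,
    WithLp.equiv_symm_apply, PiLp.toLp_apply]
  ring

/-- For every `β ∈ ℝ`, with `H(x,y,z) = (1/4)(−x² + y²) − βz` and
`C(x,y,z) = (1/2)(x² + y²) + z²`, the Rikitake vector field
`X(x,y,z) = (yz + βy, xz − βx, −xy)` satisfies `X = ∇H × ∇C`; consequently `H` and
`C` are first integrals of the conservative Rikitake system, i.e. they are constant
along all its differentiable solutions. -/
theorem stmt_16 (β : ℝ) (H C : E3 → ℝ)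
    (hH : ∀ u : E3, H u = (1 / 4) * (-(u 0) ^ 2 + (u 1) ^ 2) - β * u 2)
    (hC : ∀ u : E3, C u = (1 / 2) * ((u 0) ^ 2 + (u 1) ^ 2) + (u 2) ^ 2)
    (X : E3 → E3)
    (hX : ∀ u : E3, X u = (WithLp.equiv 2 (Fin 3 → ℝ)).symm
      ![u 1 * u 2 + β * u 1, u 0 * u 2 - β * u 0, -(u 0 * u 1)]) :
    (∀ u : E3, X u = cross3 (gradient H u) (gradient C u)) ∧
    (∀ γ : ℝ → E3, (∀ t, HasDerivAt γ (X (γ t)) t) →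
      ∀ s t : ℝ, H (γ s) = H (γ t) ∧ C (γ s) = C (γ t)) := by
  have hHfun : H = fun u : E3 => (1 / 4 : ℝ) * (-(u 0 * u 0) + u 1 * u 1) - β * u 2 :=
    funext fun u => by rw [hH]; ring
  have hCfun : C = fun u : E3 => (1 / 2 : ℝ) * (u 0 * u 0 + u 1 * u 1) + u 2 * u 2 :=
    funext fun u => by rw [hC]; ring
  have hgH : ∀ u : E3, gradient H u =
      (WithLp.equiv 2 (Fin 3 → ℝ)).symm ![-(1/2) * u 0, (1/2) * u 1, -β] := by
    intro u; rw [hHfun]; exact (gradH β u).gradient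
  have hgC : ∀ u : E3, gradient C u =
      (WithLp.equiv 2 (Fin 3 → ℝ)).symm ![u 0, u 1, 2 * u 2] := by
    intro u; rw [hCfun]; exact (gradC u).gradient
  constructor
  · intro u
    rw [hX, hgH, hgC, cross3, Equiv.apply_symm_apply, Equiv.apply_symm_apply]
    congr 1
    rw [cross_apply]
    funext i
    fin_cases i <;> simp <;> ring
  · intro γ hγ s t
    have hcoord : ∀ (i : Fin 3) (t : ℝ),
        HasDerivAt (fun t => γ t i) ((X (γ t)) i) t := by
      intro i t
      exact (EuclideanSpace.proj (i : Fin 3) : E3 →L[ℝ] ℝ).hasFDerivAt.comp_hasDerivAt t (hγ t)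
    have hXc : ∀ t : ℝ, (X (γ t) 0 = γ t 1 * γ t 2 + β * γ t 1) ∧
        (X (γ t) 1 = γ t 0 * γ t 2 - β * γ t 0) ∧ (X (γ t) 2 = -(γ t 0 * γ t 1)) := by
      intro t
      refine ⟨?_, ?_, ?_⟩ <;> rw [hX] <;> rfl
    have hHd : ∀ t : ℝ, HasDerivAt (fun t => H (γ t)) 0 t := by
      intro t
      have d0 := hcoord 0 t
      have d1 := hcoord 1 t
      have d2 := hcoord 2 t
      have key := ((((d0.mul d0).neg.add (d1.mul d1)).const_mul (1/4 : ℝ)).sub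
        (d2.const_mul β))
      rw [hHfun]
      refine key.congr_deriv ?_
      obtain ⟨e0, e1, e2⟩ := hXc t
      rw [e0, e1, e2]; ring
    have hCd : ∀ t : ℝ, HasDerivAt (fun t => C (γ t)) 0 t := by
      intro t
      have d0 := hcoord 0 t
      have d1 := hcoord 1 t
      have d2 := hcoord 2 t
      have key := ((((d0.mul d0).add (d1.mul d1)).const_mul (1/2 : ℝ)).add (d2.mul d2))
      rw [hCfun]
      refine key.congr_deriv ?_
      obtain ⟨e0, e1, e2⟩ := hXc t
      rw [e0, e1, e2]; ring
    constructor
    · have : ∀ a b : ℝ, H (γ a) = H (γ b) := by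
        intro a b
        have := is_const_of_deriv_eq_zero (f := fun t => H (γ t))
          (fun x => (hHd x).differentiableAt) (fun x => (hHd x).deriv) a b
        exact this
      exact this s t
    · have : ∀ a b : ℝ, C (γ a) = C (γ b) := by
        intro a b
        have := is_const_of_deriv_eq_zero (f := fun t => C (γ t))
          (fun x => (hCd x).differentiableAt) (fun x => (hCd x).deriv) a b
        exact this
      exact this s t
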